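/- If G is a thin connected finite digraph, then its Cartesian skeleton 𝕊(G) is connected (i.e., the underlying undirected graph of 𝕊(G), on the full vertex set of G, is connected). -/

import Mathlib

/-- Closed out-neighborhood `N⁺[v] = {v} ∪ {x : vx ∈ E}`. -/
def Nout {V : Type*} (E : V → V → Prop) (v : V) : Set V := insert v {x | E v x}

/-- Closed in-neighborhood `N⁻[v] = {v} ∪ {x : xv ∈ E}`. -/
def Nin {V : Type*} (E : V → V → Prop) (v : V) : Set V := insert v {x | E x v}

/-- Condition (3) for a family of closed neighborhoods `N`:
`N[x] ∩ N[y] ⊊ N[x] ∩ N[z]` and `N[x] ∩ N[y] ⊊ N[y] ∩ N[z]`. -/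
def NCond3 {V : Type*} (N : V → Set V) (x y z : V) : Prop :=
  N x ∩ N y ⊂ N x ∩ N z ∧ N x ∩ N y ⊂ N y ∩ N z

/-- The N-condition for a family of closed neighborhoods `N`: one of
(1) `N[x] ⊊ N[z] ⊊ N[y]`, (2) `N[y] ⊊ N[z] ⊊ N[x]`, or (3) `NCond3`. -/
def NCond {V : Type*} (N : V → Set V) (x y z : V) : Prop :=
  (N x ⊂ N z ∧ N z ⊂ N y) ∨ (N y ⊂ N z ∧ N z ⊂ N x) ∨ NCond3 N x y z

/-- The weak N-condition: `N[x] ∩ N[y] ⊆ N[x] ∩ N[z]` and `N[x] ∩ N[y] ⊆ N[y] ∩ N[z]`. -/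
def WeakNCond {V : Type*} (N : V → Set V) (x y z : V) : Prop :=
  N x ∩ N y ⊆ N x ∩ N z ∧ N x ∩ N y ⊆ N y ∩ N z

/-- Dispensability condition (D1): some `z` satisfies both the `N⁺`- and the
`N⁻`-condition with `xy`. -/
def D1 {V : Type*} (E : V → V → Prop) (x y : V) : Prop :=
  ∃ z : V, NCond (Nout E) x y z ∧ NCond (Nin E) x y z

/-- Dispensability condition (D2). -/
def D2 {V : Type*} (E : V → V → Prop) (x y : V) : Prop :=
  ∃ z₁ z₂ : V, (NCond3 (Nout E) x y z₁ ∧ WeakNCond (Nin E) x y z₁) ∧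
    (NCond3 (Nin E) x y z₂ ∧ WeakNCond (Nout E) x y z₂)

/-- Dispensability condition (D3). -/
def D3 {V : Type*} (E : V → V → Prop) (x y : V) : Prop :=
  ∃ z : V, NCond (Nout E) x y z ∧ (Nin E x = Nin E z ∨ Nin E y = Nin E z)

/-- Dispensability condition (D4). -/
def D4 {V : Type*} (E : V → V → Prop) (x y : V) : Prop :=
  ∃ z : V, NCond (Nin E) x y z ∧ (Nout E x = Nout E z ∨ Nout E y = Nout E z)

/-- Dispensability condition (D5). -/
def D5 {V : Type*} (E : V → V → Prop) (x y : V) : Prop :=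
  ∃ z₁ z₂ : V, z₁ ≠ z₂ ∧ z₁ ≠ x ∧ z₁ ≠ y ∧ z₂ ≠ x ∧ z₂ ≠ y ∧
    Nout E x = Nout E z₁ ∧ Nin E x = Nin E z₂ ∧ Nin E z₁ = Nin E y ∧ Nout E z₂ = Nout E y

/-- An arc `xy` is dispensable if one of (D1)–(D5) holds. -/
def Dispensable {V : Type*} (E : V → V → Prop) (x y : V) : Prop :=
  D1 E x y ∨ D2 E x y ∨ D3 E x y ∨ D4 E x y ∨ D5 E x y

/-- Arc relation of the Cartesian skeleton `𝕊(G)`: the non-dispensable arcs of `G`. -/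
def SkelAdj {V : Type*} (E : V → V → Prop) (x y : V) : Prop :=
  E x y ∧ ¬ Dispensable E x y

/-- A digraph is thin if distinct vertices have distinct closed out-neighborhoods or
distinct closed in-neighborhoods. -/
def Thin {V : Type*} (E : V → V → Prop) : Prop :=
  ∀ x y : V, Nout E x = Nout E y → Nin E x = Nin E y → x = y


section AuxSkel

variable {V : Type*}

lemma mem_Nout_self (E : V → V → Prop) (v : V) : v ∈ Nout E v := Set.mem_insert _ _
lemma mem_Nin_self (E : V → V → Prop) (v : V) : v ∈ Nin E v := Set.mem_insert _ _
lemma mem_Nout_of_arc {E : V → V → Prop} {x y : V} (h : E x y) : y ∈ Nout E x :=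
  Set.mem_insert_iff.2 (Or.inr h)
lemma mem_Nin_of_arc {E : V → V → Prop} {x y : V} (h : E x y) : x ∈ Nin E y :=
  Set.mem_insert_iff.2 (Or.inr h)
lemma arc_of_mem_Nout {E : V → V → Prop} {u v : V} (h : u ∈ Nout E v) (hne : u ≠ v) : E v u := by
  rcases Set.mem_insert_iff.1 h with h | h
  · exact absurd h hne
  · exact h
lemma arc_of_mem_Nin {E : V → V → Prop} {u v : V} (h : u ∈ Nin E v) (hne : u ≠ v) : E u v := by
  rcases Set.mem_insert_iff.1 h with h | h
  · exact absurd h hne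
  · exact h

/-- strict intersection growth at pair `(p,q)` relative to `(x,y)` -/
def SS (A : V → Set V) (x y p q : V) : Prop := A x ∩ A y ⊂ A p ∩ A q
/-- equal intersection, strictly smaller union -/
def SU (A : V → Set V) (x y p q : V) : Prop :=
  A x ∩ A y = A p ∩ A q ∧ A p ∪ A q ⊂ A x ∪ A y
/-- weak: intersection grows, union shrinks (weakly) -/
def SB (A : V → Set V) (x y p q : V) : Prop :=
  A x ∩ A y ⊆ A p ∩ A q ∧ A p ∪ A q ⊆ A x ∪ A y

lemma ncond_ne {A : V → Set V} {x y z : V} (h : NCond A x y z) : z ≠ x ∧ z ≠ y := by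
  rcases h with ⟨h1, h2⟩ | ⟨h1, h2⟩ | ⟨h1, h2⟩
  · exact ⟨fun e => h1.ne (by rw [e]), fun e => h2.ne (by rw [e])⟩
  · exact ⟨fun e => h2.ne (by rw [e]), fun e => h1.ne (by rw [e])⟩
  · constructor
    · intro e; subst e; exact h2.ne (Set.inter_comm _ _)
    · intro e; subst e; exact h1.ne rfl

lemma ncond_out_adj {E : V → V → Prop} {x y z : V} (hxy : E x y)
    (h : NCond (Nout E) x y z) : E z y ∨ E y z := by
  obtain ⟨hzx, hzy⟩ := ncond_ne h
  rcases h with ⟨h1, h2⟩ | ⟨h1, h2⟩ | ⟨h1, h2⟩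
  · exact Or.inr (arc_of_mem_Nout (h2.subset (mem_Nout_self E z)) hzy)
  · exact Or.inl (arc_of_mem_Nout (h1.subset (mem_Nout_self E y)) (Ne.symm hzy))
  · exact Or.inl (arc_of_mem_Nout
      ((h1.subset ⟨mem_Nout_of_arc hxy, mem_Nout_self E y⟩).2) (Ne.symm hzy))

lemma ncond_in_adj {E : V → V → Prop} {x y z : V} (hxy : E x y)
    (h : NCond (Nin E) x y z) : E x z ∨ E z x := by
  obtain ⟨hzx, hzy⟩ := ncond_ne h
  rcases h with ⟨h1, h2⟩ | ⟨h1, h2⟩ | ⟨h1, h2⟩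
  · exact Or.inl (arc_of_mem_Nin (h1.subset (mem_Nin_self E x)) (Ne.symm hzx))
  · exact Or.inr (arc_of_mem_Nin (h2.subset (mem_Nin_self E z)) hzx)
  · exact Or.inl (arc_of_mem_Nin
      ((h1.subset ⟨mem_Nin_self E x, mem_Nin_of_arc hxy⟩).2) (Ne.symm hzx))

lemma ncond_summary {A : V → Set V} {x y z : V} (h : NCond A x y z) :
    (SS A x y x z ∨ SU A x y x z) ∧ (SS A x y z y ∨ SU A x y z y) := by
  rcases h with ⟨h1, h2⟩ | ⟨h1, h2⟩ | ⟨h1, h2⟩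
  · have hxy : A x ⊆ A y := h1.subset.trans h2.subset
    have e1 : A x ∩ A y = A x := Set.inter_eq_left.2 hxy
    have e2 : A x ∩ A z = A x := Set.inter_eq_left.2 h1.subset
    have e3 : A x ∪ A z = A z := Set.union_eq_right.2 h1.subset
    have e4 : A x ∪ A y = A y := Set.union_eq_right.2 hxy
    have e5 : A z ∩ A y = A z := Set.inter_eq_left.2 h2.subset
    have e6 : A z ∪ A y = A y := Set.union_eq_right.2 h2.subset
    constructor
    · exact Or.inr ⟨by rw [e1, e2], by rw [e3, e4]; exact h2⟩
    · exact Or.inl (show A x ∩ A y ⊂ A z ∩ A y by rw [e1, e5]; exact h1)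
  · have hyx : A y ⊆ A x := h1.subset.trans h2.subset
    have e1 : A x ∩ A y = A y := Set.inter_eq_right.2 hyx
    have e2 : A x ∩ A z = A z := Set.inter_eq_right.2 h2.subset
    have e5 : A z ∩ A y = A y := Set.inter_eq_right.2 h1.subset
    have e6 : A z ∪ A y = A z := Set.union_eq_left.2 h1.subset
    have e4 : A x ∪ A y = A x := Set.union_eq_left.2 hyx
    constructor
    · exact Or.inl (show A x ∩ A y ⊂ A x ∩ A z by rw [e1, e2]; exact h1)
    · exact Or.inr ⟨by rw [e1, e5], by rw [e6, e4]; exact h2⟩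
  · refine ⟨Or.inl h1, Or.inl ?_⟩
    show A x ∩ A y ⊂ A z ∩ A y
    rw [Set.inter_comm (A z) (A y)]; exact h2

end AuxSkel

section PM
variable {V : Type*} [Fintype V]

noncomputable def pm (A B : V → Set V) (x y : V) : ℕ :=
  (2 * Fintype.card V - ((A x ∩ A y).ncard + (B x ∩ B y).ncard)) * (2 * Fintype.card V + 1)
    + ((A x ∪ A y).ncard + (B x ∪ B y).ncard)

lemma pm_symm_fam (A B : V → Set V) (x y : V) : pm A B x y = pm B A x y := by
  unfold pm
  rw [add_comm ((A x ∩ A y).ncard), add_comm ((A x ∪ A y).ncard)]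

lemma pm_symm (A B : V → Set V) (x y : V) : pm A B x y = pm A B y x := by
  unfold pm
  rw [Set.inter_comm (A x) (A y), Set.inter_comm (B x) (B y),
    Set.union_comm (A x) (A y), Set.union_comm (B x) (B y)]

lemma ncard_le_card (s : Set V) : s.ncard ≤ Fintype.card V := by
  have := Set.ncard_le_ncard (Set.subset_univ s) Set.finite_univ
  simpa [Set.ncard_univ, Nat.card_eq_fintype_card] using this

lemma num_core {n s s' u u' : ℕ} (hs : s < s') (hs' : s' ≤ 2 * n) (hu' : u' ≤ 2 * n) :
    (2 * n - s') * (2 * n + 1) + u' < (2 * n - s) * (2 * n + 1) + u := by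
  have h1 : 2 * n - s' < 2 * n - s := by omega
  calc (2 * n - s') * (2 * n + 1) + u' < (2 * n - s') * (2 * n + 1) + (2 * n + 1) := by omega
    _ = (2 * n - s' + 1) * (2 * n + 1) := by ring
    _ ≤ (2 * n - s) * (2 * n + 1) := Nat.mul_le_mul_right _ (by omega)
    _ ≤ (2 * n - s) * (2 * n + 1) + u := Nat.le_add_right _ _

lemma pm_lt_combine {A B : V → Set V} {x y p q : V}
    (hA : A x ∩ A y ⊆ A p ∩ A q) (hB : B x ∩ B y ⊆ B p ∩ B q)
    (h : A x ∩ A y ⊂ A p ∩ A q ∨ B x ∩ B y ⊂ B p ∩ B q ∨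
      (A p ∪ A q ⊆ A x ∪ A y ∧ B p ∪ B q ⊆ B x ∪ B y ∧
        (A p ∪ A q ⊂ A x ∪ A y ∨ B p ∪ B q ⊂ B x ∪ B y))) :
    pm A B p q < pm A B x y := by
  have haA : (A x ∩ A y).ncard ≤ (A p ∩ A q).ncard := Set.ncard_le_ncard hA
  have haB : (B x ∩ B y).ncard ≤ (B p ∩ B q).ncard := Set.ncard_le_ncard hB
  have hbA : (A p ∩ A q).ncard ≤ Fintype.card V := ncard_le_card _
  have hbB : (B p ∩ B q).ncard ≤ Fintype.card V := ncard_le_card _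
  have huA : (A p ∪ A q).ncard ≤ Fintype.card V := ncard_le_card _
  have huB : (B p ∪ B q).ncard ≤ Fintype.card V := ncard_le_card _
  unfold pm
  rcases h with h | h | ⟨h1, h2, h3⟩
  · exact num_core (by have := Set.ncard_lt_ncard h; omega) (by omega) (by omega)
  · exact num_core (by have := Set.ncard_lt_ncard h; omega) (by omega) (by omega)
  · have hu1 : (A p ∪ A q).ncard ≤ (A x ∪ A y).ncard := Set.ncard_le_ncard h1
    have hu2 : (B p ∪ B q).ncard ≤ (B x ∪ B y).ncard := Set.ncard_le_ncard h2
    have hu : (A p ∪ A q).ncard + (B p ∪ B q).ncard <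
        (A x ∪ A y).ncard + (B x ∪ B y).ncard := by
      rcases h3 with h3 | h3
      · have := Set.ncard_lt_ncard h3; omega
      · have := Set.ncard_lt_ncard h3; omega
    rcases Nat.lt_or_ge ((A x ∩ A y).ncard + (B x ∩ B y).ncard)
        ((A p ∩ A q).ncard + (B p ∩ B q).ncard) with hs | hs
    · exact num_core hs (by omega) (by omega)
    · have hseq : (A x ∩ A y).ncard + (B x ∩ B y).ncard
          = (A p ∩ A q).ncard + (B p ∩ B q).ncard := by omega
      rw [← hseq]
      omega

lemma L_ss {A B : V → Set V} {x y p q : V} (hA : SS A x y p q ∨ SU A x y p q)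
    (hB : SS B x y p q ∨ SU B x y p q) : pm A B p q < pm A B x y := by
  have hA' : A x ∩ A y ⊆ A p ∩ A q := by
    rcases hA with h | h; exacts [h.subset, h.1.subset]
  have hB' : B x ∩ B y ⊆ B p ∩ B q := by
    rcases hB with h | h; exacts [h.subset, h.1.subset]
  rcases hA with hA | hA
  · exact pm_lt_combine hA' hB' (Or.inl hA)
  · rcases hB with hB | hB
    · exact pm_lt_combine hA' hB' (Or.inr (Or.inl hB))
    · exact pm_lt_combine hA' hB' (Or.inr (Or.inr ⟨hA.2.subset, hB.2.subset, Or.inl hA.2⟩))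

lemma L_sb {A B : V → Set V} {x y p q : V} (hA : SS A x y p q ∨ SU A x y p q)
    (hB : SB B x y p q) : pm A B p q < pm A B x y := by
  have hA' : A x ∩ A y ⊆ A p ∩ A q := by
    rcases hA with h | h; exacts [h.subset, h.1.subset]
  rcases hA with hA | hA
  · exact pm_lt_combine hA' hB.1 (Or.inl hA)
  · exact pm_lt_combine hA' hB.1 (Or.inr (Or.inr ⟨hA.2.subset, hB.2, Or.inl hA.2⟩))

lemma L_bs {A B : V → Set V} {x y p q : V} (hA : SB A x y p q)
    (hB : SS B x y p q ∨ SU B x y p q) : pm A B p q < pm A B x y := by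
  rw [pm_symm_fam A B p q, pm_symm_fam A B x y]
  exact L_sb hB hA

lemma L_sw {A B : V → Set V} {x y p q : V} (hA : SS A x y p q)
    (hB : B x ∩ B y ⊆ B p ∩ B q) : pm A B p q < pm A B x y :=
  pm_lt_combine hA.subset hB (Or.inl hA)

end PM

/-- If `G` is a thin connected finite digraph, then its Cartesian skeleton `𝕊(G)` is
connected: any two vertices are joined by a walk in the underlying undirected graph
of `𝕊(G)`. -/
theorem skeleton_connected {V : Type*} [Fintype V]
    (E : V → V → Prop) (hirr : Irreflexive E) (hthin : Thin E)
    (hconn : ∀ x y : V, Relation.ReflTransGen (fun a b => E a b ∨ E b a) x y) :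
    ∀ x y : V, Relation.ReflTransGen (fun a b => SkelAdj E a b ∨ SkelAdj E b a) x y := by
  classical
  have hsym : Symmetric (fun a b => SkelAdj E a b ∨ SkelAdj E b a) := fun a b h => h.symm
  have key : ∀ n : ℕ, ∀ x y : V, pm (Nout E) (Nin E) x y ≤ n → E x y →
      Relation.ReflTransGen (fun a b => SkelAdj E a b ∨ SkelAdj E b a) x y := by
    intro n
    induction n using Nat.strong_induction_on with
    | _ n IH =>
      intro x y hm hxy
      by_cases hd : Dispensable E x y
      case neg => exact Relation.ReflTransGen.single (Or.inl ⟨hxy, hd⟩)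
      have step : ∀ p q : V, (E p q ∨ E q p) →
          pm (Nout E) (Nin E) p q < pm (Nout E) (Nin E) x y →
          Relation.ReflTransGen (fun a b => SkelAdj E a b ∨ SkelAdj E b a) p q := by
        intro p q hpq hlt
        rcases hpq with h | h
        · exact IH (pm (Nout E) (Nin E) p q) (lt_of_lt_of_le hlt hm) p q le_rfl h
        · have h2 : pm (Nout E) (Nin E) q p < n := by
            rw [pm_symm (Nout E) (Nin E) q p]; exact lt_of_lt_of_le hlt hm
          exact ((@Relation.ReflTransGen.stdSymm _ _ ⟨hsym⟩).symm _ _)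
            (IH (pm (Nout E) (Nin E) q p) h2 q p le_rfl h)
      rcases hd with ⟨z, hout, hin⟩ | ⟨z1, z2, ⟨h3o, hwi⟩, -⟩ | ⟨z, hout, heq⟩ |
        ⟨z, hin, heq⟩ | ⟨z1, z2, h12, hzx, hzy, -, -, hAx, hBx2, hBz1, hAz2⟩
      · -- D1
        have adjzy := ncond_out_adj hxy hout
        have adjxz := ncond_in_adj hxy hin
        have sA := ncond_summary hout
        have sB := ncond_summary hin
        exact (step x z adjxz (L_ss sA.1 sB.1)).trans (step z y adjzy (L_ss sA.2 sB.2))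
      · -- D2 (use z1)
        have h3o' : NCond (Nout E) x y z1 := Or.inr (Or.inr h3o)
        obtain ⟨hzx, hzy⟩ := ncond_ne h3o'
        have adjzy := ncond_out_adj hxy h3o'
        have adjxz : E x z1 ∨ E z1 x := Or.inl (arc_of_mem_Nin
          ((hwi.1 ⟨mem_Nin_self E x, mem_Nin_of_arc hxy⟩).2) (Ne.symm hzx))
        have hA2 : SS (Nout E) x y z1 y := by
          have := h3o.2
          show Nout E x ∩ Nout E y ⊂ Nout E z1 ∩ Nout E y
          rwa [Set.inter_comm (Nout E z1) (Nout E y)]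
        have hB2 : Nin E x ∩ Nin E y ⊆ Nin E z1 ∩ Nin E y := by
          rw [Set.inter_comm (Nin E z1) (Nin E y)]; exact hwi.2
        exact (step x z1 adjxz (L_sw h3o.1 hwi.1)).trans (step z1 y adjzy (L_sw hA2 hB2))
      · -- D3
        obtain ⟨hzx, hzy⟩ := ncond_ne hout
        have adjzy := ncond_out_adj hxy hout
        have hxz : x ∈ Nin E z := by
          rcases heq with h | h
          · exact h ▸ mem_Nin_self E x
          · exact h ▸ mem_Nin_of_arc hxy
        have adjxz : E x z ∨ E z x := Or.inl (arc_of_mem_Nin hxz (Ne.symm hzx))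
        have sA := ncond_summary hout
        have sB : SB (Nin E) x y x z ∧ SB (Nin E) x y z y := by
          rcases heq with h | h
          · constructor
            · constructor
              · rw [← h, Set.inter_self]; exact Set.inter_subset_left
              · rw [← h, Set.union_self]; exact Set.subset_union_left
            · constructor
              · rw [← h]
              · rw [← h]
          · constructor
            · constructor
              · rw [← h]
              · rw [← h]
            · constructor
              · rw [← h, Set.inter_self]; exact Set.inter_subset_right
              · rw [← h, Set.union_self]; exact Set.subset_union_right
        exact (step x z adjxz (L_sb sA.1 sB.1)).trans (step z y adjzy (L_sb sA.2 sB.2))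
      · -- D4
        obtain ⟨hzx, hzy⟩ := ncond_ne hin
        have adjxz := ncond_in_adj hxy hin
        have hyz : y ∈ Nout E z := by
          rcases heq with h | h
          · exact h ▸ mem_Nout_of_arc hxy
          · exact h ▸ mem_Nout_self E y
        have adjzy : E z y ∨ E y z := Or.inl (arc_of_mem_Nout hyz (Ne.symm hzy))
        have sB := ncond_summary hin
        have sA : SB (Nout E) x y x z ∧ SB (Nout E) x y z y := by
          rcases heq with h | h
          · constructor
            · constructor
              · rw [← h, Set.inter_self]; exact Set.inter_subset_left
              · rw [← h, Set.union_self]; exact Set.subset_union_left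
            · constructor
              · rw [← h]
              · rw [← h]
          · constructor
            · constructor
              · rw [← h]
              · rw [← h]
            · constructor
              · rw [← h, Set.inter_self]; exact Set.inter_subset_right
              · rw [← h, Set.union_self]; exact Set.subset_union_right
        exact (step x z adjxz (L_bs sA.1 sB.1)).trans (step z y adjzy (L_bs sA.2 sB.2))
      · -- D5 (use z1)
        have hyz1 : y ∈ Nout E z1 := hAx ▸ mem_Nout_of_arc hxy
        have hxz1 : x ∈ Nin E z1 := hBz1.symm ▸ mem_Nin_of_arc hxy
        have adjxz : E x z1 ∨ E z1 x := Or.inl (arc_of_mem_Nin hxz1 (Ne.symm hzx))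
        have adjzy : E z1 y ∨ E y z1 := Or.inl (arc_of_mem_Nout hyz1 (Ne.symm hzy))
        have eA : Nout E x ∩ Nout E z1 = Nout E x := by rw [← hAx, Set.inter_self]
        have eA' : Nout E x ∪ Nout E z1 = Nout E x := by rw [← hAx, Set.union_self]
        have eB : Nin E x ∩ Nin E z1 = Nin E x ∩ Nin E y := by rw [hBz1]
        have eB' : Nin E x ∪ Nin E z1 = Nin E x ∪ Nin E y := by rw [hBz1]
        have m1 : pm (Nout E) (Nin E) x z1 < pm (Nout E) (Nin E) x y := by
          by_cases hsub : Nout E x ⊆ Nout E y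
          · have hne : Nout E x ≠ Nout E y := by
              intro e
              exact hzy (hthin z1 y (by rw [← hAx, e]) hBz1)
            apply pm_lt_combine
            · rw [eA]; exact Set.inter_subset_left
            · exact eB.symm.subset
            · refine Or.inr (Or.inr ⟨?_, eB'.subset, Or.inl ?_⟩)
              · rw [eA']; exact Set.subset_union_left
              · rw [eA', Set.union_eq_right.2 hsub]
                exact ssubset_of_subset_of_ne hsub hne
          · apply pm_lt_combine
            · rw [eA]; exact Set.inter_subset_left
            · exact eB.symm.subset
            · refine Or.inl ?_
              rw [eA]
              exact ssubset_of_subset_of_ne Set.inter_subset_left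
                (fun e => hsub (Set.inter_eq_left.1 e))
        have fB : Nin E z1 ∩ Nin E y = Nin E y := by rw [hBz1, Set.inter_self]
        have fB' : Nin E z1 ∪ Nin E y = Nin E y := by rw [hBz1, Set.union_self]
        have fA : Nout E z1 ∩ Nout E y = Nout E x ∩ Nout E y := by rw [← hAx]
        have fA' : Nout E z1 ∪ Nout E y = Nout E x ∪ Nout E y := by rw [← hAx]
        have m2 : pm (Nout E) (Nin E) z1 y < pm (Nout E) (Nin E) x y := by
          by_cases hsub : Nin E y ⊆ Nin E x
          · have hne : Nin E y ≠ Nin E x := fun e =>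
              hzx (hthin z1 x hAx.symm (hBz1.trans e))
            apply pm_lt_combine
            · exact fA.symm.subset
            · rw [fB]; exact Set.inter_subset_right
            · refine Or.inr (Or.inr ⟨fA'.subset, ?_, Or.inr ?_⟩)
              · rw [fB']; exact Set.subset_union_right
              · rw [fB', Set.union_eq_left.2 hsub]
                exact ssubset_of_subset_of_ne hsub hne
          · apply pm_lt_combine
            · exact fA.symm.subset
            · rw [fB]; exact Set.inter_subset_right
            · refine Or.inr (Or.inl ?_)
              rw [fB]
              exact ssubset_of_subset_of_ne Set.inter_subset_right
                (fun e => hsub (Set.inter_eq_right.1 e))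
        exact (step x z1 adjxz m1).trans (step z1 y adjzy m2)
  intro x y
  have h := hconn x y
  induction h with
  | refl => exact Relation.ReflTransGen.refl
  | @tail b c hab hbc ih =>
    rcases hbc with h | h
    · exact ih.trans (key (pm (Nout E) (Nin E) b c) b c le_rfl h)
    · exact ih.trans (((@Relation.ReflTransGen.stdSymm _ _ ⟨hsym⟩).symm _ _)
        (key (pm (Nout E) (Nin E) c b) c b le_rfl h))
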